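/- Let A be a commutative ring with identity. If sr(A) ≤ n, then every matrix in SL_m(A) whose reduction modulo the Jacobson radical is the identity lies in E_m(A). -/

import Mathlib

open scoped BigOperators

/-- A tuple is unimodular if some combination of its entries equals 1. -/
def Unimodular {A : Type*} [CommRing A] {n : ℕ} (a : Fin n → A) : Prop :=
  ∃ b : Fin n → A, ∑ i, b i * a i = 1

/-- A unimodular `(n+1)`-tuple is reducible if adding multiples of the last entry
to the first `n` entries yields a unimodular `n`-tuple. -/
def Reducible {A : Type*} [CommRing A] {n : ℕ} (a : Fin (n + 1) → A) : Prop :=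
  ∃ c : Fin n → A,
    Unimodular (fun i : Fin n => a i.castSucc + c i * a (Fin.last n))

/-- `srLE A n` : the Bass stable rank of `A` is at most `n`, i.e. every
unimodular `(n+1)`-tuple is reducible. -/
def srLE (A : Type*) [CommRing A] (n : ℕ) : Prop :=
  ∀ a : Fin (n + 1) → A, Unimodular a → Reducible a

/-- The Bass stable rank of `A`, as an extended natural number
(`⊤` if no `n` works). -/
noncomputable def sr (A : Type*) [CommRing A] : ℕ∞ :=
  sInf {c : ℕ∞ | ∃ n : ℕ, c = (n : ℕ∞) ∧ srLE A n}

/-- An elementary matrix: differs from the identity in at most one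
off-diagonal entry. -/
def IsElementary {A : Type*} [CommRing A] {n : ℕ}
    (E : Matrix (Fin n) (Fin n) A) : Prop :=
  ∃ i j : Fin n, ∃ a : A, i ≠ j ∧ E = 1 + Matrix.single i j a

/-- The set of products of elementary matrices; since the inverse of an
elementary matrix is elementary, this is the group `E_n(A)`. -/
def ElemSubgroup (A : Type*) [CommRing A] (n : ℕ) :
    Submonoid (Matrix (Fin n) (Fin n) A) :=
  Submonoid.closure {E | IsElementary E}

namespace Stmt10Aux

open Matrix

variable {A : Type*} [CommRing A]

lemma elem_mul_cancel {k} {i j : Fin k} (h : i ≠ j) (a : A) :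
    (1 + single i j a) * (1 + single i j (-a)) = 1 := by
  have h0 : single i j a * single i j (-a) = 0 :=
    single_mul_single_of_ne a i j i h.symm (-a)
  rw [mul_add, add_mul, add_mul, mul_one, one_mul, h0, add_zero, mul_one, add_assoc,
    ← single_add, add_neg_cancel, single_zero, add_zero]

lemma elementary_mem {k} {i j : Fin k} (h : i ≠ j) (a : A) :
    (1 + single i j a) ∈ ElemSubgroup A k :=
  Submonoid.subset_closure ⟨i, j, a, h, rfl⟩

lemma elem_det_one {k} (P : Matrix (Fin k) (Fin k) A) (hP : P ∈ ElemSubgroup A k) :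
    P.det = 1 := by
  induction hP using Submonoid.closure_induction with
  | mem x hx =>
    obtain ⟨i, j, a, hij, rfl⟩ := hx
    exact Matrix.det_transvection_of_ne i j hij a
  | one => simp
  | mul x y _ _ hx hy => rw [Matrix.det_mul, hx, hy, mul_one]

lemma sum_mul_sum_zero {k t : ℕ} (X Y : Fin t → Matrix (Fin k) (Fin k) A)
    (hXY : ∀ i j, X i * Y j = 0) : (∑ i, X i) * (∑ j, Y j) = 0 := by
  rw [Finset.sum_mul_sum]
  exact Finset.sum_eq_zero fun i _ => Finset.sum_eq_zero fun j _ => hXY i j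

lemma one_add_mul_one_add {k t : ℕ} (X Y : Fin t → Matrix (Fin k) (Fin k) A)
    (hXY : ∀ i j, X i * Y j = 0) :
    (1 + ∑ i, X i) * (1 + ∑ i, Y i) = 1 + ((∑ i, X i) + ∑ i, Y i) := by
  rw [mul_add, mul_one, add_mul, one_mul, sum_mul_sum_zero X Y hXY, add_zero, add_assoc]

lemma one_add_sum_mem {k t : ℕ} (X : Fin t → Matrix (Fin k) (Fin k) A)
    (hX : ∀ i j, X i * X j = 0)
    (hE : ∀ i, (1 + X i) ∈ ElemSubgroup A k) :
    (1 + ∑ i, X i) ∈ ElemSubgroup A k := by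
  induction t with
  | zero => simpa using one_mem _
  | succ t IH =>
    have key : (1 + X 0) * (1 + ∑ i : Fin t, X i.succ) = 1 + ∑ i, X i := by
      rw [mul_add, mul_one, add_mul, one_mul, Finset.mul_sum]
      have : ∀ i : Fin t, X 0 * X i.succ = 0 := fun i => hX 0 i.succ
      simp only [this, Finset.sum_const_zero, add_zero, Fin.sum_univ_succ]
      abel
    rw [← key]
    exact mul_mem (hE 0) (IH (fun i => X i.succ) (fun i j => hX i.succ j.succ)
      (fun i => hE i.succ))

/-- The block matrix with corner `x`, lower-right block `N`, zeros elsewhere. -/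
def blk {m : ℕ} (x : A) (N : Matrix (Fin m) (Fin m) A) :
    Matrix (Fin (m + 1)) (Fin (m + 1)) A :=
  Matrix.of (Fin.cons (Fin.cons x 0) (fun i => Fin.cons 0 (N i)))

@[simp] lemma blk_zero_zero {m} (x : A) (N : Matrix (Fin m) (Fin m) A) : blk x N 0 0 = x := rfl
@[simp] lemma blk_zero_succ {m} (x : A) (N : Matrix (Fin m) (Fin m) A) (j : Fin m) :
    blk x N 0 j.succ = 0 := rfl
@[simp] lemma blk_succ_zero {m} (x : A) (N : Matrix (Fin m) (Fin m) A) (i : Fin m) :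
    blk x N i.succ 0 = 0 := by simp [blk]
@[simp] lemma blk_succ_succ {m} (x : A) (N : Matrix (Fin m) (Fin m) A) (i j : Fin m) :
    blk x N i.succ j.succ = N i j := by simp [blk]

lemma blk_one_one {m : ℕ} : blk (1:A) (1 : Matrix (Fin m) (Fin m) A) = 1 := by
  ext i j
  induction i using Fin.cases with
  | zero => induction j using Fin.cases with
    | zero => simp
    | succ j => simp [Matrix.one_apply, (Fin.succ_ne_zero j).symm]
  | succ i => induction j using Fin.cases with
    | zero => simp [Matrix.one_apply, Fin.succ_ne_zero i]
    | succ j => simp [Matrix.one_apply, Fin.succ_inj]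

lemma blk_one_mul {m : ℕ} (N P : Matrix (Fin m) (Fin m) A) :
    blk 1 (N * P) = blk 1 N * blk 1 P := by
  ext i j
  rw [Matrix.mul_apply, Fin.sum_univ_succ]
  induction i using Fin.cases with
  | zero => induction j using Fin.cases with
    | zero => simp
    | succ j => simp
  | succ i => induction j using Fin.cases with
    | zero => simp
    | succ j => simp [Matrix.mul_apply]

lemma blk_one_elementary {m : ℕ} (i j : Fin m) (a : A) :
    blk 1 (1 + single i j a) = 1 + single i.succ j.succ a := by
  ext r s
  induction r using Fin.cases with
  | zero => induction s using Fin.cases with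
    | zero => simp [Matrix.add_apply, Matrix.one_apply, Matrix.single, Fin.succ_ne_zero]
    | succ s => simp [Matrix.add_apply, Matrix.one_apply, Matrix.single,
        Fin.succ_ne_zero, (Fin.succ_ne_zero s).symm]
  | succ r => induction s using Fin.cases with
    | zero => simp [Matrix.add_apply, Matrix.one_apply, Matrix.single,
        Fin.succ_ne_zero, (Fin.succ_ne_zero r).symm]
    | succ s => simp [Matrix.add_apply, Matrix.one_apply, Matrix.single, Fin.succ_inj]

lemma blk_one_mem {m : ℕ} (N : Matrix (Fin m) (Fin m) A) (hN : N ∈ ElemSubgroup A m) :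
    blk 1 N ∈ ElemSubgroup A (m + 1) := by
  induction hN using Submonoid.closure_induction with
  | mem x hx =>
    obtain ⟨i, j, a, hij, rfl⟩ := hx
    rw [blk_one_elementary]
    exact Submonoid.subset_closure ⟨i.succ, j.succ, a, by simp [Fin.succ_inj, hij], rfl⟩
  | one => rw [blk_one_one]; exact one_mem _
  | mul x y _ _ hx hy => rw [blk_one_mul]; exact mul_mem hx hy

lemma whitehead_eq {k : ℕ} (i0 i1 : Fin k) (hne : i0 ≠ i1) (u v : A)
    (huv : u * v = 1) (hvu : v * u = 1) :
    (1 + single i0 i1 u) * (1 + single i1 i0 (-v)) * (1 + single i0 i1 u) *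
      ((1 + single i0 i1 (-1)) * (1 + single i1 i0 1) *
        (1 + single i0 i1 (-1))) =
    1 + single i0 i0 (u - 1) + single i1 i1 (v - 1) := by
  simp only [mul_add, add_mul, mul_one, one_mul, single_mul_single_same,
    single_mul_single_of_ne, hne, hne.symm, ne_eq, not_false_eq_true, mul_neg, neg_mul,
    neg_neg, huv, hvu, mul_one, one_mul, add_zero, zero_add, zero_mul, mul_zero, neg_zero]
  ext r s
  simp only [Matrix.add_apply, Matrix.one_apply, Matrix.single, Matrix.of_apply]
  split_ifs <;> simp_all <;> ring

lemma whitehead_mem {k : ℕ} (i0 i1 : Fin k) (hne : i0 ≠ i1) (u v : A)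
    (huv : u * v = 1) (hvu : v * u = 1) :
    (1 + single i0 i0 (u - 1) + single i1 i1 (v - 1)) ∈ ElemSubgroup A k := by
  rw [← whitehead_eq i0 i1 hne u v huv hvu]
  exact mul_mem (mul_mem (mul_mem (elementary_mem hne u) (elementary_mem hne.symm (-v)))
      (elementary_mem hne u))
    (mul_mem (mul_mem (elementary_mem hne (-1)) (elementary_mem hne.symm 1))
      (elementary_mem hne (-1)))


lemma pi_one_isUnit {x : A} (h : Ideal.Quotient.mk ((⊥ : Ideal A).jacobson) x = 1) :
    IsUnit x := by
  refine Ideal.isUnit_of_sub_one_mem_jacobson_bot x ?_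
  have h1 : Ideal.Quotient.mk ((⊥ : Ideal A).jacobson) x
      = Ideal.Quotient.mk ((⊥ : Ideal A).jacobson) 1 := by rwa [_root_.map_one]
  exact Ideal.Quotient.eq.mp h1

lemma step (m : ℕ)
    (IH : ∀ N : Matrix (Fin (m + 1)) (Fin (m + 1)) A, N.det = 1 →
      N.map (Ideal.Quotient.mk ((⊥ : Ideal A).jacobson)) = 1 → N ∈ ElemSubgroup A (m + 1))
    (M : Matrix (Fin (m + 2)) (Fin (m + 2)) A) (hdet : M.det = 1)
    (hM : M.map (Ideal.Quotient.mk ((⊥ : Ideal A).jacobson)) = 1) :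
    M ∈ ElemSubgroup A (m + 2) := by
  set π := Ideal.Quotient.mk ((⊥ : Ideal A).jacobson) with hπdef
  have hπM : ∀ a b, π (M a b) = if a = b then 1 else 0 := by
    intro a b
    have := congrFun (congrFun hM a) b
    simpa [Matrix.map_apply, Matrix.one_apply] using this
  -- the pivot is a unit
  set u : A := M 0 0 with hudef
  have hπu : π u = 1 := by simpa using hπM 0 0
  have hu : IsUnit u := pi_one_isUnit hπu
  set v : A := ↑hu.unit⁻¹ with hvdef
  have hvu : v * u = 1 := hu.val_inv_mul
  have huv : u * v = 1 := by rw [mul_comm]; exact hvu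
  have hπv : π v = 1 := by
    have := congrArg π hvu
    rw [_root_.map_mul, hπu, mul_one, _root_.map_one] at this
    exact this
  -- the clearing matrices
  set c : Fin (m + 1) → A := fun t => -(M t.succ 0) * v with hcdef
  set d : Fin (m + 1) → A := fun t => -(v * M 0 t.succ) with hddef
  set L : Matrix (Fin (m + 2)) (Fin (m + 2)) A :=
    1 + ∑ t, single (Fin.succ t) 0 (c t) with hLdef
  set L' : Matrix (Fin (m + 2)) (Fin (m + 2)) A :=
    1 + ∑ t, single (Fin.succ t) 0 (-(c t)) with hL'def
  set R : Matrix (Fin (m + 2)) (Fin (m + 2)) A :=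
    1 + ∑ t, single 0 (Fin.succ t) (d t) with hRdef
  set R' : Matrix (Fin (m + 2)) (Fin (m + 2)) A :=
    1 + ∑ t, single 0 (Fin.succ t) (-(d t)) with hR'def
  have hcolzero : ∀ (x y : Fin (m+1) → A) (i j : Fin (m+1)),
      single (Fin.succ i) (0 : Fin (m+2)) (x i) *
        single (Fin.succ j) (0 : Fin (m+2)) (y j) = 0 :=
    fun x y i j => single_mul_single_of_ne _ _ _ _ (Fin.succ_ne_zero j).symm _
  have hrowzero : ∀ (x y : Fin (m+1) → A) (i j : Fin (m+1)),
      single (0 : Fin (m+2)) (Fin.succ i) (x i) *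
        single (0 : Fin (m+2)) (Fin.succ j) (y j) = 0 :=
    fun x y i j => single_mul_single_of_ne _ _ _ _ (Fin.succ_ne_zero i) _
  have hLmem : L ∈ ElemSubgroup A (m + 2) :=
    one_add_sum_mem _ (hcolzero c c) fun t => elementary_mem (Fin.succ_ne_zero t) _
  have hL'mem : L' ∈ ElemSubgroup A (m + 2) :=
    one_add_sum_mem _ (hcolzero (fun t => -(c t)) (fun t => -(c t)))
      fun t => elementary_mem (Fin.succ_ne_zero t) _
  have hRmem : R ∈ ElemSubgroup A (m + 2) :=
    one_add_sum_mem _ (hrowzero d d) fun t => elementary_mem (Fin.succ_ne_zero t).symm _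
  have hR'mem : R' ∈ ElemSubgroup A (m + 2) :=
    one_add_sum_mem _ (hrowzero (fun t => -(d t)) (fun t => -(d t)))
      fun t => elementary_mem (Fin.succ_ne_zero t).symm _
  have hL'L : L' * L = 1 := by
    rw [hL'def, hLdef, one_add_mul_one_add _ _ (hcolzero _ c), ← Finset.sum_add_distrib]
    simp [← single_add]
  have hRR' : R * R' = 1 := by
    rw [hRdef, hR'def, one_add_mul_one_add _ _ (hrowzero d _), ← Finset.sum_add_distrib]
    simp [← single_add]
  -- entry computations
  have hSmul : ∀ (x : Fin (m+1) → A) (P : Matrix (Fin (m+2)) (Fin (m+2)) A)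
      (s : Fin (m+1)) (b : Fin (m+2)),
      ((∑ t, single (Fin.succ t) (0 : Fin (m+2)) (x t)) * P) s.succ b
        = x s * P 0 b := by
    intro x P s b
    rw [Finset.sum_mul, Matrix.sum_apply]
    rw [Finset.sum_eq_single s]
    · exact single_mul_apply_same _ _ _ _ _
    · intro t _ hts
      exact single_mul_apply_of_ne (x t) t.succ 0 s.succ b
        (fun h => hts (Fin.succ_inj.mp h).symm) P
    · simp
  have hSmul0 : ∀ (x : Fin (m+1) → A) (P : Matrix (Fin (m+2)) (Fin (m+2)) A) (b : Fin (m+2)),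
      ((∑ t, single (Fin.succ t) (0 : Fin (m+2)) (x t)) * P) 0 b = 0 := by
    intro x P b
    rw [Finset.sum_mul, Matrix.sum_apply]
    refine Finset.sum_eq_zero fun t _ => ?_
    exact single_mul_apply_of_ne (x t) t.succ 0 0 b (Fin.succ_ne_zero t).symm P
  have hmulS : ∀ (x : Fin (m+1) → A) (P : Matrix (Fin (m+2)) (Fin (m+2)) A)
      (a : Fin (m+2)) (s : Fin (m+1)),
      (P * ∑ t, single (0 : Fin (m+2)) (Fin.succ t) (x t)) a s.succ
        = P a 0 * x s := by
    intro x P a s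
    rw [Finset.mul_sum, Matrix.sum_apply]
    rw [Finset.sum_eq_single s]
    · exact mul_single_apply_same _ _ _ _ _
    · intro t _ hts
      exact mul_single_apply_of_ne (x t) 0 t.succ a s.succ
        (fun h => hts (Fin.succ_inj.mp h).symm) P
    · simp
  have hmulS0 : ∀ (x : Fin (m+1) → A) (P : Matrix (Fin (m+2)) (Fin (m+2)) A) (a : Fin (m+2)),
      (P * ∑ t, single (0 : Fin (m+2)) (Fin.succ t) (x t)) a 0 = 0 := by
    intro x P a
    rw [Finset.mul_sum, Matrix.sum_apply]
    refine Finset.sum_eq_zero fun t _ => ?_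
    exact mul_single_apply_of_ne (x t) 0 t.succ a 0 (Fin.succ_ne_zero t).symm P
  set N : Matrix (Fin (m+1)) (Fin (m+1)) A :=
    Matrix.of (fun s t => M s.succ t.succ + c s * M 0 t.succ) with hNdef
  have hLM : L * M = M + (∑ t, single (Fin.succ t) (0 : Fin (m+2)) (c t)) * M := by
    rw [hLdef, add_mul, one_mul]
  have hcol : ∀ s : Fin (m+1), M s.succ 0 + c s * M 0 0 = 0 := by
    intro s
    rw [hcdef]
    show M s.succ 0 + -M s.succ 0 * v * M 0 0 = 0
    rw [mul_assoc, ← hudef, hvu, mul_one, add_neg_cancel]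
  have hrow : ∀ t : Fin (m+1), M 0 t.succ + M 0 0 * d t = 0 := by
    intro t
    rw [hddef]
    show M 0 t.succ + M 0 0 * -(v * M 0 t.succ) = 0
    rw [mul_neg, ← mul_assoc, ← hudef, huv, one_mul, add_neg_cancel]
  have hT : L * M * R = blk u N := by
    ext a b
    rw [hRdef, mul_add, mul_one, Matrix.add_apply, hLM]
    induction a using Fin.cases with
    | zero =>
      induction b using Fin.cases with
      | zero =>
        rw [hmulS0]
        simp only [Matrix.add_apply]
        rw [hSmul0, add_zero, add_zero, blk_zero_zero]
      | succ b =>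
        rw [hmulS]
        simp only [Matrix.add_apply]
        rw [hSmul0, hSmul0, add_zero, add_zero, blk_zero_succ]
        exact hrow b
    | succ a =>
      induction b using Fin.cases with
      | zero =>
        rw [hmulS0]
        simp only [Matrix.add_apply]
        rw [hSmul, add_zero, blk_succ_zero]
        exact hcol a
      | succ b =>
        rw [hmulS]
        simp only [Matrix.add_apply]
        rw [hSmul, hSmul, hcol a, zero_mul, add_zero, blk_succ_succ]
        rfl
  have hdetT : (blk u N).det = u * N.det := by
    rw [Matrix.det_succ_row_zero]
    rw [Fin.sum_univ_succ]
    have hsub : (blk u N).submatrix Fin.succ Fin.succ = N := by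
      ext s t
      rw [Matrix.submatrix_apply, blk_succ_succ]
    simp [hsub]
  have hdetM' : (L * M * R).det = 1 := by
    rw [Matrix.det_mul, Matrix.det_mul, hdet, elem_det_one L hLmem, elem_det_one R hRmem]
    ring
  have hudetN : u * N.det = 1 := by rw [← hdetT, ← hT]; exact hdetM'
  -- N' : scale first row of N by u
  set N' : Matrix (Fin (m+1)) (Fin (m+1)) A :=
    Matrix.diagonal (fun s => if s = 0 then u else 1) * N with hN'def
  have hN'app : ∀ s t, N' s t = (if s = 0 then u else 1) * N s t := by
    intro s t; rw [hN'def, Matrix.diagonal_mul]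
  have hdetN' : N'.det = 1 := by
    rw [hN'def, Matrix.det_mul, Matrix.det_diagonal, Fin.prod_univ_succ]
    simp only [if_pos rfl, Fin.succ_ne_zero, if_false, Finset.prod_const_one, mul_one]
    exact hudetN
  have hπN : ∀ s t, π (N s t) = if s = t then 1 else 0 := by
    intro s t
    have : π (N s t) = π (M s.succ t.succ) + π (-(M s.succ 0)) * π v * π (M 0 t.succ) := by
      rw [hNdef]; show π (M s.succ t.succ + -M s.succ 0 * v * M 0 t.succ) = _
      rw [_root_.map_add, _root_.map_mul, _root_.map_mul]
    rw [this, _root_.map_neg, hπM, hπM, hπM]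
    simp [Fin.succ_ne_zero s, Fin.succ_inj]
  have hπN' : N'.map π = 1 := by
    ext s t
    rw [Matrix.map_apply, hN'app, _root_.map_mul, hπN, Matrix.one_apply]
    by_cases hs : s = 0 <;> simp [hs, hπu]
  have hN'mem : N' ∈ ElemSubgroup A (m + 1) := IH N' hdetN' hπN'
  have hembmem : blk 1 N' ∈ ElemSubgroup A (m + 2) := blk_one_mem N' hN'mem
  -- Whitehead matrix
  have hne01 : (0 : Fin (m + 2)) ≠ 1 := Fin.zero_ne_one
  set W : Matrix (Fin (m+2)) (Fin (m+2)) A :=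
    1 + single (0 : Fin (m+2)) 0 (u - 1) + single (1 : Fin (m+2)) 1 (v - 1)
    with hWdef
  have hWmem : W ∈ ElemSubgroup A (m + 2) := whitehead_mem 0 1 hne01 u v huv hvu
  have hWT : blk u N = W * blk 1 N' := by
    have hexp : W * blk 1 N' = blk 1 N' + single (0 : Fin (m+2)) 0 (u - 1) * blk 1 N'
        + single (1 : Fin (m+2)) 1 (v - 1) * blk 1 N' := by
      rw [hWdef, add_mul, add_mul, one_mul]
    ext a b
    rw [hexp, Matrix.add_apply, Matrix.add_apply]
    induction a using Fin.cases with
    | zero =>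
      rw [single_mul_apply_same,
        single_mul_apply_of_ne _ _ _ _ _ hne01]
      induction b using Fin.cases with
      | zero => rw [blk_zero_zero, blk_zero_zero]; ring
      | succ b => rw [blk_zero_succ, blk_zero_succ]; ring
    | succ a =>
      rw [single_mul_apply_of_ne _ _ _ _ _ (Fin.succ_ne_zero a)]
      induction b using Fin.cases with
      | zero =>
        rcases eq_or_ne a 0 with rfl | ha
        · rw [blk_succ_zero, blk_succ_zero, Fin.succ_zero_eq_one,
            single_mul_apply_same]
          rw [← Fin.succ_zero_eq_one, blk_succ_zero]; ring
        · rw [blk_succ_zero, blk_succ_zero,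
            single_mul_apply_of_ne _ _ _ _ _ (by
              rw [← Fin.succ_zero_eq_one]; exact fun h => ha (Fin.succ_inj.mp h))]
          ring
      | succ b =>
        rcases eq_or_ne a 0 with rfl | ha
        · rw [blk_succ_succ, blk_succ_succ, Fin.succ_zero_eq_one,
            single_mul_apply_same, ← Fin.succ_zero_eq_one, blk_succ_succ,
            hN'app]
          simp only [if_pos rfl, ite_true]
          linear_combination (-(N 0 b)) * hvu
        · rw [blk_succ_succ, blk_succ_succ,
            single_mul_apply_of_ne _ _ _ _ _ (by
              rw [← Fin.succ_zero_eq_one]; exact fun h => ha (Fin.succ_inj.mp h)),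
            hN'app, if_neg ha, one_mul]
          ring
  have hfin : M = L' * (L * M * R) * R' := by
    have : L' * (L * M * R) * R' = (L' * L) * M * (R * R') := by
      simp only [mul_assoc]
    rw [this, hL'L, hRR', one_mul, mul_one]
  rw [hfin, hT, hWT]
  exact mul_mem (mul_mem hL'mem (mul_mem hWmem hembmem)) hR'mem

lemma main : ∀ (m : ℕ) (M : Matrix (Fin m) (Fin m) A), M.det = 1 →
    M.map (Ideal.Quotient.mk ((⊥ : Ideal A).jacobson)) = 1 → M ∈ ElemSubgroup A m
  | 0, M, _, _ => by
    have h1 : M = 1 := by ext i j; exact i.elim0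
    rw [h1]; exact one_mem _
  | 1, M, hdet, _ => by
    have h0 : M 0 0 = 1 := by rw [← Matrix.det_fin_one M]; exact hdet
    have h1 : M = 1 := by
      ext i j
      fin_cases i <;> fin_cases j
      simpa using h0
    rw [h1]; exact one_mem _
  | (m+2), M, hdet, hM => step m (fun N h1 h2 => main (m+1) N h1 h2) M hdet hM

end Stmt10Aux

/-- If `sr(A) ≤ n`, then every matrix in `SL_m(A)` whose entrywise reduction
modulo the Jacobson radical is the identity lies in `E_m(A)`. -/
theorem stmt10 {A : Type*} [CommRing A] (n : ℕ) (hsr : sr A ≤ (n : ℕ∞))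
    (m : ℕ) (M : Matrix (Fin m) (Fin m) A) (hdet : M.det = 1)
    (hM : M.map (Ideal.Quotient.mk ((⊥ : Ideal A).jacobson)) = 1) :
    M ∈ ElemSubgroup A m := by
  exact Stmt10Aux.main m M hdet hM
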